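/- Let f : [0,1]^m → ℝ be continuous with full modulus of continuity Ω_f, and let B_𝐧 denote the multivariate Bernstein operator with degrees n_1, ..., n_m ≥ 1. Then sup_{x∈[0,1]^m} |B_𝐧(f;x) − f(x)| ≤ (3/2) Ω_f(√(∑_{l=1}^m 1/n_l)). -/

import Mathlib

noncomputable def bern (n k : ℕ) (x : ℝ) : ℝ :=
  (n.choose k : ℝ) * x ^ k * (1 - x) ^ (n - k)

noncomputable def bernOpM (m : ℕ) (n : Fin m → ℕ) (f : (Fin m → ℝ) → ℝ) (x : Fin m → ℝ) : ℝ :=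
  ∑ k : (∀ l : Fin m, Fin (n l + 1)),
    f (fun l => (k l : ℝ) / (n l : ℝ)) * ∏ l : Fin m, bern (n l) (k l) (x l)

lemma bern_eval (n k : ℕ) (x : ℝ) : bern n k x = (bernsteinPolynomial ℝ n k).eval x := by
  simp [bern, bernsteinPolynomial, mul_assoc]

lemma sum_bern (n : ℕ) (x : ℝ) : ∑ k : Fin (n+1), bern n k (x) = 1 := by
  simp only [bern_eval]
  rw [Fin.sum_univ_eq_sum_range (fun k => (bernsteinPolynomial ℝ n k).eval x)]
  rw [← Polynomial.eval_finset_sum, bernsteinPolynomial.sum]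
  simp

lemma var_bern (n : ℕ) (hn : 1 ≤ n) (x : ℝ) :
    ∑ k : Fin (n+1), (x - (k:ℝ)/(n:ℝ))^2 * bern n k x = x * (1-x) / n := by
  have hn0 : (n:ℝ) ≠ 0 := by positivity
  have h := bernsteinPolynomial.variance (R := ℝ) n
  have h2 := congrArg (Polynomial.eval x) h
  rw [Polynomial.eval_finset_sum] at h2
  simp only [Polynomial.eval_mul, Polynomial.eval_pow, Polynomial.eval_sub, Polynomial.eval_natCast,
    Polynomial.eval_smul, Polynomial.eval_X, Polynomial.eval_one, smul_eq_mul, nsmul_eq_mul] at h2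
  rw [Fin.sum_univ_eq_sum_range (fun k => (x - (k:ℝ)/(n:ℝ))^2 * bern n k x)]
  have key : ∀ k ∈ Finset.range (n+1), (x - (k:ℝ)/(n:ℝ))^2 * bern n k x
      = ((n:ℝ) * x - k)^2 * (bernsteinPolynomial ℝ n k).eval x / (n:ℝ)^2 := by
    intro k _
    rw [bern_eval]
    have e : x - (k:ℝ)/(n:ℝ) = ((n:ℝ)*x - k)/(n:ℝ) := by field_simp
    rw [e, div_pow, div_mul_eq_mul_div]
  rw [Finset.sum_congr rfl key, ← Finset.sum_div, h2]
  field_simp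

noncomputable def eudist {m : ℕ} (x y : Fin m → ℝ) : ℝ :=
  Real.sqrt (∑ l : Fin m, (x l - y l) ^ 2)

noncomputable def modContM (m : ℕ) (f : (Fin m → ℝ) → ℝ) (δ : ℝ) : ℝ :=
  sSup {r : ℝ | ∃ x ∈ Set.Icc (0 : Fin m → ℝ) 1, ∃ y ∈ Set.Icc (0 : Fin m → ℝ) 1,
    eudist x y ≤ δ ∧ r = |f x - f y|}

lemma bern_nonneg (n k : ℕ) {x : ℝ} (h0 : 0 ≤ x) (h1 : x ≤ 1) : 0 ≤ bern n k x := by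
  have : 0 ≤ 1 - x := by linarith
  unfold bern; positivity

lemma zero_mem_Icc (m : ℕ) : (0 : Fin m → ℝ) ∈ Set.Icc (0 : Fin m → ℝ) 1 :=
  ⟨le_refl _, fun l => by norm_num⟩

lemma eudist_nonneg {m : ℕ} (x y : Fin m → ℝ) : 0 ≤ eudist x y := Real.sqrt_nonneg _

lemma eudist_eq_zero {m : ℕ} {x y : Fin m → ℝ} (h : eudist x y = 0) : x = y := by
  have hs : ∑ l : Fin m, (x l - y l)^2 = 0 := by
    have h1 := Real.sqrt_eq_zero'.mp h
    exact le_antisymm h1 (Finset.sum_nonneg fun l _ => sq_nonneg _)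
  funext l
  have := (Finset.sum_eq_zero_iff_of_nonneg (fun l _ => sq_nonneg (x l - y l))).mp hs l
    (Finset.mem_univ l)
  have : x l - y l = 0 := by
    have := pow_eq_zero_iff (n := 2) (by norm_num) |>.mp this
    exact this
  linarith

section Mod
variable {m : ℕ} {f : (Fin m → ℝ) → ℝ}
  (hf : ContinuousOn f (Set.Icc (0 : Fin m → ℝ) 1))

lemma mod_set_nonempty {δ : ℝ} (hδ : 0 ≤ δ) :
    (0:ℝ) ∈ {r : ℝ | ∃ x ∈ Set.Icc (0 : Fin m → ℝ) 1, ∃ y ∈ Set.Icc (0 : Fin m → ℝ) 1,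
      eudist x y ≤ δ ∧ r = |f x - f y|} := by
  refine ⟨0, zero_mem_Icc m, 0, zero_mem_Icc m, ?_, by simp⟩
  simp [eudist, hδ]

include hf in
lemma mod_set_bddAbove (δ : ℝ) :
    BddAbove {r : ℝ | ∃ x ∈ Set.Icc (0 : Fin m → ℝ) 1, ∃ y ∈ Set.Icc (0 : Fin m → ℝ) 1,
      eudist x y ≤ δ ∧ r = |f x - f y|} := by
  obtain ⟨M, hM⟩ := (isCompact_Icc (a := (0 : Fin m → ℝ)) (b := 1)).exists_bound_of_continuousOn hf
  refine ⟨2*M, fun r hr => ?_⟩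
  obtain ⟨x, hx, y, hy, _, rfl⟩ := hr
  calc |f x - f y| ≤ ‖f x‖ + ‖f y‖ := by simpa using norm_sub_le (f x) (f y)
    _ ≤ M + M := add_le_add (hM x hx) (hM y hy)
    _ = 2*M := by ring

include hf in
lemma mod_nonneg {δ : ℝ} (hδ : 0 ≤ δ) : 0 ≤ modContM m f δ :=
  le_csSup (mod_set_bddAbove hf δ) (mod_set_nonempty hδ)

include hf in
lemma le_mod {δ : ℝ} {x y : Fin m → ℝ} (hx : x ∈ Set.Icc (0 : Fin m → ℝ) 1)
    (hy : y ∈ Set.Icc (0 : Fin m → ℝ) 1) (hd : eudist x y ≤ δ) :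
    |f x - f y| ≤ modContM m f δ :=
  le_csSup (mod_set_bddAbove hf δ) ⟨x, hx, y, hy, hd, rfl⟩

include hf in
lemma mod_mul {δ : ℝ} (hδ : 0 ≤ δ) (N : ℕ) {x y : Fin m → ℝ}
    (hx : x ∈ Set.Icc (0 : Fin m → ℝ) 1) (hy : y ∈ Set.Icc (0 : Fin m → ℝ) 1)
    (hd : eudist x y ≤ N * δ) :
    |f x - f y| ≤ N * modContM m f δ := by
  rcases Nat.eq_zero_or_pos N with hN | hN
  · subst hN
    simp only [Nat.cast_zero, zero_mul] at hd ⊢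
    have : eudist x y = 0 := le_antisymm hd (eudist_nonneg x y)
    rw [eudist_eq_zero this]
    simp
  · have hN0 : (N:ℝ) ≠ 0 := by positivity
    set z : ℕ → (Fin m → ℝ) := fun i => fun l => x l + ((i:ℝ)/N) * (y l - x l) with hz
    have hz0 : z 0 = x := by funext l; simp [hz]
    have hzN : z N = y := by funext l; simp [hz, hN0]
    have hzmem : ∀ i : ℕ, i ≤ N → z i ∈ Set.Icc (0 : Fin m → ℝ) 1 := by
      intro i hi
      have ht0 : 0 ≤ (i:ℝ)/N := by positivity
      have ht1 : (i:ℝ)/N ≤ 1 := by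
        rw [div_le_one (by positivity)]; exact_mod_cast hi
      constructor <;> intro l
      · have h1 := hx.1 l; have h2 := hy.1 l
        simp only [Pi.zero_apply] at h1 h2 ⊢
        have : z i l = (1 - (i:ℝ)/N) * x l + ((i:ℝ)/N) * y l := by simp [hz]; ring
        rw [this]
        have := mul_nonneg (by linarith : (0:ℝ) ≤ 1 - (i:ℝ)/N) h1
        have := mul_nonneg ht0 h2
        linarith
      · have h1 := hx.2 l; have h2 := hy.2 l
        simp only [Pi.one_apply] at h1 h2 ⊢
        have : z i l = (1 - (i:ℝ)/N) * x l + ((i:ℝ)/N) * y l := by simp [hz]; ring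
        rw [this]
        have := mul_le_mul_of_nonneg_left h1 (by linarith : (0:ℝ) ≤ 1 - (i:ℝ)/N)
        have := mul_le_mul_of_nonneg_left h2 ht0
        linarith
    have hstep : ∀ i : ℕ, eudist (z i) (z (i+1)) = eudist x y / N := by
      intro i
      have : ∀ l, (z i l - z (i+1) l)^2 = (x l - y l)^2 / (N:ℝ)^2 := by
        intro l; simp only [hz]; push_cast; field_simp; ring
      unfold eudist
      rw [Finset.sum_congr rfl (fun l _ => this l), ← Finset.sum_div,
        Real.sqrt_div (Finset.sum_nonneg fun l _ => sq_nonneg _)]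
      congr 1
      rw [Real.sqrt_sq (by positivity)]
    have hst : eudist x y / N ≤ δ := by
      rw [div_le_iff₀ (by positivity)]; linarith [hd]
    have tel : f x - f y = ∑ i ∈ Finset.range N, (f (z i) - f (z (i+1))) := by
      rw [Finset.sum_range_sub' (fun i => f (z i)), hz0, hzN]
    calc |f x - f y| = |∑ i ∈ Finset.range N, (f (z i) - f (z (i+1)))| := by rw [tel]
      _ ≤ ∑ i ∈ Finset.range N, |f (z i) - f (z (i+1))| := Finset.abs_sum_le_sum_abs _ _
      _ ≤ ∑ i ∈ Finset.range N, modContM m f δ := by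
          refine Finset.sum_le_sum fun i hi => ?_
          have hi' : i < N := Finset.mem_range.mp hi
          exact le_mod hf (hzmem i hi'.le) (hzmem (i+1) hi') (by rw [hstep]; exact hst)
      _ = N * modContM m f δ := by rw [Finset.sum_const, Finset.card_range, nsmul_eq_mul]

include hf in
lemma mod_quad {δ : ℝ} (hδ : 0 < δ) {x y : Fin m → ℝ}
    (hx : x ∈ Set.Icc (0 : Fin m → ℝ) 1) (hy : y ∈ Set.Icc (0 : Fin m → ℝ) 1) :
    |f x - f y| ≤ (1 + (eudist x y)^2 / δ^2) * modContM m f δ := by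
  set d := eudist x y with hdd
  have hd0 : 0 ≤ d := eudist_nonneg x y
  set lam := d / δ with hlam
  have hlam0 : 0 ≤ lam := by positivity
  set N := ⌈lam⌉₊ with hN
  have hdN : d ≤ N * δ := by
    have := Nat.le_ceil lam
    calc d = lam * δ := by rw [hlam, div_mul_cancel₀ d hδ.ne']
      _ ≤ N * δ := mul_le_mul_of_nonneg_right this hδ.le
  have h1 := mod_mul hf hδ.le N hx hy hdN
  have hΩ := mod_nonneg hf hδ.le
  have hNle : (N:ℝ) ≤ 1 + lam^2 := by
    rcases le_or_gt lam 1 with h | h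
    · have : N ≤ 1 := Nat.ceil_le.mpr (by simpa using h)
      have : (N:ℝ) ≤ 1 := by exact_mod_cast this
      nlinarith
    · have := Nat.ceil_lt_add_one hlam0
      have h2 : (N:ℝ) < lam + 1 := this
      nlinarith
  have hlamsq : lam^2 = d^2/δ^2 := by rw [hlam, div_pow]
  calc |f x - f y| ≤ N * modContM m f δ := h1
    _ ≤ (1 + lam^2) * modContM m f δ := mul_le_mul_of_nonneg_right hNle hΩ
    _ = (1 + d^2/δ^2) * modContM m f δ := by rw [hlamsq]

end Mod

lemma sum_prod_bern (m : ℕ) (n : Fin m → ℕ) (x : Fin m → ℝ) :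
    ∑ k : (∀ l : Fin m, Fin (n l + 1)), ∏ l : Fin m, bern (n l) (k l) (x l) = 1 := by
  rw [← Fintype.prod_sum (f := fun (l : Fin m) (j : Fin (n l + 1)) => bern (n l) j (x l))]
  simp [sum_bern]

lemma var_prod_bern (m : ℕ) (n : Fin m → ℕ) (hn : ∀ l, 1 ≤ n l) (x : Fin m → ℝ) (l0 : Fin m) :
    ∑ k : (∀ l : Fin m, Fin (n l + 1)),
      (x l0 - ((k l0 : ℕ) : ℝ) / (n l0 : ℝ))^2 * ∏ l : Fin m, bern (n l) (k l) (x l)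
    = x l0 * (1 - x l0) / (n l0 : ℝ) := by
  have key := Fintype.prod_sum (f := fun (l : Fin m) (j : Fin (n l + 1)) =>
    (if l = l0 then (x l - ((j:ℕ):ℝ)/((n l):ℝ))^2 else 1) * bern (n l) j (x l))
  have lhs_eq : ∀ k : (∀ l : Fin m, Fin (n l + 1)),
      (∏ l : Fin m, (if l = l0 then (x l - ((k l :ℕ):ℝ)/((n l):ℝ))^2 else 1)
        * bern (n l) (k l) (x l))
      = (x l0 - ((k l0 : ℕ) : ℝ) / (n l0 : ℝ))^2 * ∏ l : Fin m, bern (n l) (k l) (x l) := by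
    intro k
    rw [Finset.prod_mul_distrib]
    congr 1
    rw [Finset.prod_ite_eq' Finset.univ l0
      (fun l => (x l - ((k l :ℕ):ℝ)/((n l):ℝ))^2)]
    simp
  rw [← Finset.sum_congr rfl (fun k _ => lhs_eq k), ← key]
  have fac : ∀ l : Fin m, (∑ j : Fin (n l + 1),
      (if l = l0 then (x l - ((j:ℕ):ℝ)/((n l):ℝ))^2 else 1) * bern (n l) j (x l))
      = if l = l0 then x l * (1 - x l) / (n l : ℝ) else 1 := by
    intro l
    by_cases h : l = l0
    · simp only [h, if_true]
      subst h
      exact var_bern (n l) (hn l) (x l)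
    · simp only [h, if_false, one_mul]
      exact sum_bern (n l) (x l)
  rw [Finset.prod_congr rfl (fun l _ => fac l),
    Finset.prod_ite_eq' Finset.univ l0 (fun l => x l * (1 - x l) / (n l : ℝ))]
  simp

theorem stmt14 (m : ℕ) (n : Fin m → ℕ) (hn : ∀ l, 1 ≤ n l)
    (f : (Fin m → ℝ) → ℝ)
    (hf : ContinuousOn f (Set.Icc (0 : Fin m → ℝ) 1)) :
    (⨆ x : Set.Icc (0 : Fin m → ℝ) 1, |bernOpM m n f x - f x|)
      ≤ (3 / 2) * modContM m f (Real.sqrt (∑ l : Fin m, 1 / (n l : ℝ))) := by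
  have hne : Nonempty (Set.Icc (0 : Fin m → ℝ) 1) := ⟨⟨0, zero_mem_Icc m⟩⟩
  set δ : ℝ := Real.sqrt (∑ l : Fin m, 1 / (n l : ℝ)) with hδdef
  have hδ0 : 0 ≤ δ := Real.sqrt_nonneg _
  have hΩ0 : 0 ≤ modContM m f δ := mod_nonneg hf hδ0
  rcases Nat.eq_zero_or_pos m with hm | hm
  · subst hm
    apply ciSup_le
    rintro ⟨x, hx⟩
    have hxu : x = (fun l => (default : Fin (0+1)) / (n l : ℝ)) := by
      funext l; exact absurd l.2 (by omega)
    have : bernOpM 0 n f x = f x := by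
      unfold bernOpM
      rw [Fintype.sum_unique]
      simp only [Finset.univ_eq_empty, Finset.prod_empty, mul_one]
      congr 1
      funext l; exact absurd l.2 (by omega)
    rw [this]
    simp only [sub_self, abs_zero]
    positivity
  · have hmne : (Finset.univ : Finset (Fin m)).Nonempty := by
      rw [Finset.univ_nonempty_iff]
      exact ⟨⟨0, hm⟩⟩
    have hsum_pos : 0 < ∑ l : Fin m, 1 / (n l : ℝ) := by
      apply Finset.sum_pos _ hmne
      intro l _
      have : (0:ℝ) < n l := by exact_mod_cast hn l
      positivity
    have hδpos : 0 < δ := Real.sqrt_pos.mpr hsum_pos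
    have hδsq : δ^2 = ∑ l : Fin m, 1 / (n l : ℝ) := Real.sq_sqrt hsum_pos.le
    apply ciSup_le
    rintro ⟨x, hx⟩
    simp only
    -- weights
    set W : (∀ l : Fin m, Fin (n l + 1)) → ℝ := fun k => ∏ l : Fin m, bern (n l) (k l) (x l)
      with hWdef
    have hW1 : ∑ k, W k = 1 := sum_prod_bern m n x
    have hWpos : ∀ k, 0 ≤ W k := by
      intro k
      apply Finset.prod_nonneg
      intro l _
      exact bern_nonneg _ _ (hx.1 l) (hx.2 l)
    set p : (∀ l : Fin m, Fin (n l + 1)) → (Fin m → ℝ) :=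
      fun k => fun l => ((k l : ℕ) : ℝ) / (n l : ℝ) with hpdef
    have hpmem : ∀ k, p k ∈ Set.Icc (0 : Fin m → ℝ) 1 := by
      intro k
      constructor <;> intro l
      · have : (0:ℝ) ≤ ((k l : ℕ):ℝ) := by positivity
        have hnl : (0:ℝ) < n l := by exact_mod_cast hn l
        exact div_nonneg this hnl.le
      · have hnl : (0:ℝ) < n l := by exact_mod_cast hn l
        have hk : ((k l : ℕ):ℝ) ≤ n l := by
          exact_mod_cast Nat.lt_succ_iff.mp (k l).2
        simpa [hpdef] using (div_le_one hnl).mpr hk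
    have hdist2 : ∀ k, (eudist (p k) x)^2 = ∑ l : Fin m, (x l - p k l)^2 := by
      intro k
      unfold eudist
      rw [Real.sq_sqrt (Finset.sum_nonneg fun l _ => sq_nonneg _)]
      exact Finset.sum_congr rfl fun l _ => by ring
    have hvar : ∑ k, (eudist (p k) x)^2 * W k
        = ∑ l : Fin m, x l * (1 - x l) / (n l : ℝ) := by
      calc ∑ k, (eudist (p k) x)^2 * W k
          = ∑ k, ∑ l : Fin m, (x l - p k l)^2 * W k := by
            refine Finset.sum_congr rfl fun k _ => ?_
            rw [hdist2 k, Finset.sum_mul]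
        _ = ∑ l : Fin m, ∑ k, (x l - p k l)^2 * W k := Finset.sum_comm
        _ = ∑ l : Fin m, x l * (1 - x l) / (n l : ℝ) := by
            refine Finset.sum_congr rfl fun l _ => ?_
            exact var_prod_bern m n hn x l
    have hvar_le : ∑ k, (eudist (p k) x)^2 * W k ≤ δ^2 / 4 := by
      rw [hvar, hδsq, Finset.sum_div]
      refine Finset.sum_le_sum fun l _ => ?_
      have hnl : (0:ℝ) < n l := by exact_mod_cast hn l
      have h14 : x l * (1 - x l) ≤ 1/4 := by nlinarith [sq_nonneg (x l - 1/2)]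
      calc x l * (1 - x l) / (n l : ℝ) ≤ (1/4) / (n l : ℝ) := by
            exact div_le_div_of_nonneg_right h14 hnl.le |>.trans_eq rfl
        _ = 1 / (n l : ℝ) / 4 := by ring
    have hdiff : bernOpM m n f x - f x = ∑ k, (f (p k) - f x) * W k := by
      have h1 : bernOpM m n f x = ∑ k, f (p k) * W k := rfl
      have h3 : ∑ k, (f (p k) - f x) * W k
          = (∑ k, f (p k) * W k) - (∑ k, f x * W k) := by
        rw [← Finset.sum_sub_distrib]
        exact Finset.sum_congr rfl fun k _ => by ring
      rw [h1, h3, ← Finset.mul_sum, hW1, mul_one]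
    set Ω := modContM m f δ with hΩdef
    have step1 : |bernOpM m n f x - f x| ≤ ∑ k, |f (p k) - f x| * W k := by
      rw [hdiff]
      calc |∑ k, (f (p k) - f x) * W k| ≤ ∑ k, |(f (p k) - f x) * W k| :=
            Finset.abs_sum_le_sum_abs _ _
        _ = ∑ k, |f (p k) - f x| * W k := by
            refine Finset.sum_congr rfl fun k _ => ?_
            rw [abs_mul, abs_of_nonneg (hWpos k)]
    have step2 : ∑ k, |f (p k) - f x| * W k
        ≤ ∑ k, (Ω * W k + (Ω/δ^2) * ((eudist (p k) x)^2 * W k)) := by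
      refine Finset.sum_le_sum fun k _ => ?_
      have := mod_quad hf hδpos (hpmem k) hx
      calc |f (p k) - f x| * W k ≤ (1 + (eudist (p k) x)^2/δ^2) * Ω * W k :=
            mul_le_mul_of_nonneg_right this (hWpos k)
        _ = Ω * W k + (Ω/δ^2) * ((eudist (p k) x)^2 * W k) := by ring
    have step3 : ∑ k, (Ω * W k + (Ω/δ^2) * ((eudist (p k) x)^2 * W k))
        = Ω + (Ω/δ^2) * (∑ k, (eudist (p k) x)^2 * W k) := by
      rw [Finset.sum_add_distrib, ← Finset.mul_sum, ← Finset.mul_sum, hW1, mul_one]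
    have hΩδ : 0 ≤ Ω/δ^2 := by positivity
    have step4 : Ω + (Ω/δ^2) * (∑ k, (eudist (p k) x)^2 * W k) ≤ (3/2) * Ω := by
      have h5 := mul_le_mul_of_nonneg_left hvar_le hΩδ
      have hδ2 : (δ:ℝ)^2 ≠ 0 := by positivity
      have : (Ω/δ^2) * (δ^2/4) = Ω/4 := by field_simp
      nlinarith
    calc |bernOpM m n f x - f x| ≤ _ := step1
      _ ≤ _ := step2
      _ = _ := step3
      _ ≤ (3/2) * Ω := step4
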